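/- (Derivative of the Perron root with respect to a single entry: ∂λ/∂a_{ij} = v_i·u_j.) Let n ≥ 1 and let M be an n×n real matrix with nonnegative entries that is irreducible, with spectral radius λ = ρ(M). Let u be a column vector with all entries strictly positive satisfying M·u = λ·u, and let v be a column vector with all entries strictly positive satisfying vᵀ·M = λ·vᵀ, normalized so that vᵀ·u = 1. Fix indices i, j and let E^{(ij)} be the matrix whose (i,j) entry is 1 and all other entries are 0. Then there exist ε₀ > 0 and a function μ : (-ε₀, ε₀) → ℝ such that μ(0) = λ, for every ε ∈ (-ε₀, ε₀) the number μ(ε) is a real eigenvalue of M + ε·E^{(ij)}, and μ is differentiable at 0 with derivative μ'(0) = v_i·u_j > 0. -/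

import Mathlib

open Matrix

lemma pow_entry_nonneg {n : ℕ} {M : Matrix (Fin n) (Fin n) ℝ}
    (hM : ∀ i j, 0 ≤ M i j) (k : ℕ) : ∀ i j, 0 ≤ (M ^ k) i j := by
  induction k with
  | zero =>
    intro i j
    simp only [pow_zero, Matrix.one_apply]
    split <;> norm_num
  | succ k ih =>
    intro i j
    rw [pow_succ, Matrix.mul_apply]
    exact Finset.sum_nonneg fun m _ => mul_nonneg (ih i m) (hM m j)

lemma mulVec_pow_eig {n : ℕ} {M : Matrix (Fin n) (Fin n) ℝ} {w : Fin n → ℝ} {c : ℝ}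
    (h : M *ᵥ w = c • w) (k : ℕ) : (M ^ k) *ᵥ w = c ^ k • w := by
  induction k with
  | zero => simp
  | succ k ih =>
    rw [pow_succ, ← Matrix.mulVec_mulVec, h, Matrix.mulVec_smul, ih, smul_smul, pow_succ]
    ring_nf

lemma simplicity {n : ℕ} (hn : 1 ≤ n) (M : Matrix (Fin n) (Fin n) ℝ)
    (hM : ∀ i j, 0 ≤ M i j)
    (hirr : ∀ i j : Fin n, ∃ k : ℕ, 0 < k ∧ 0 < (M ^ k) i j)
    (u : Fin n → ℝ) (hu : ∀ i, 0 < u i) (c : ℝ)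
    (hMu : M *ᵥ u = c • u) (w : Fin n → ℝ) (hw : M *ᵥ w = c • w) :
    ∃ t : ℝ, w = t • u := by
  haveI : Nonempty (Fin n) := ⟨⟨0, hn⟩⟩
  set t := Finset.univ.inf' Finset.univ_nonempty (fun m => w m / u m) with ht
  obtain ⟨q, -, hq⟩ := Finset.exists_mem_eq_inf' Finset.univ_nonempty (fun m => w m / u m)
  refine ⟨t, ?_⟩
  set z := w - t • u with hzdef
  have hz : M *ᵥ z = c • z := by
    rw [hzdef, Matrix.mulVec_sub, Matrix.mulVec_smul, hw, hMu, smul_sub, smul_comm]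
  have hz0 : ∀ m, 0 ≤ z m := by
    intro m
    have h1 : t ≤ w m / u m := Finset.inf'_le _ (Finset.mem_univ m)
    have : t * u m ≤ w m := by
      rw [← le_div_iff₀ (hu m)] at *
      exact h1
    simpa [hzdef, sub_nonneg] using this
  have hzq : z q = 0 := by
    simp only [hzdef, Pi.sub_apply, Pi.smul_apply, smul_eq_mul]
    rw [ht, hq, div_mul_cancel₀ _ (ne_of_gt (hu q)), sub_self]
  by_contra hne
  have hzne : z ≠ 0 := by
    intro h0
    exact hne (by rw [← sub_eq_zero]; exact h0)
  obtain ⟨p, hp⟩ := Function.ne_iff.mp hzne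
  have hzp : 0 < z p := lt_of_le_of_ne (hz0 p) (Ne.symm hp)
  obtain ⟨k, hk, hkp⟩ := hirr q p
  have hpow := mulVec_pow_eig hz k
  have h1 : ((M ^ k) *ᵥ z) q = 0 := by
    rw [hpow]; simp [hzq]
  have h2 : 0 < ((M ^ k) *ᵥ z) q := by
    rw [Matrix.mulVec, dotProduct]
    have := Finset.single_le_sum (f := fun m => (M ^ k) q m * z m)
      (fun m _ => mul_nonneg (pow_entry_nonneg hM k q m) (hz0 m)) (Finset.mem_univ p)
    exact lt_of_lt_of_le (mul_pos hkp hzp) this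
  rw [h1] at h2
  exact lt_irrefl 0 h2

/-- Spectral radius of a real square matrix: the supremum (here: maximum) of the
absolute values of its complex eigenvalues. -/
noncomputable def specRad {n : ℕ} (M : Matrix (Fin n) (Fin n) ℝ) : ℝ :=
  sSup ((fun z : ℂ => ‖z‖) '' spectrum ℂ (M.map (Complex.ofReal ·)))

/-- A nonnegative matrix is irreducible if for every pair of indices `(i, j)`
there is a positive power `k` with `(M ^ k) i j > 0`. -/
def MatIrreducible {n : ℕ} (M : Matrix (Fin n) (Fin n) ℝ) : Prop :=
  ∀ i j : Fin n, ∃ k : ℕ, 0 < k ∧ 0 < (M ^ k) i j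

/-- derivative of the Perron root with respect to a single
entry: perturbing the `(i, j)` entry yields a real eigenvalue branch through
`λ = specRad M` with derivative `∂λ/∂a_{ij} = v i * u j > 0` at `0`. -/
theorem stmt_9 {n : ℕ} (hn : 1 ≤ n) (M : Matrix (Fin n) (Fin n) ℝ)
    (hM : ∀ i j, 0 ≤ M i j) (hirr : MatIrreducible M)
    (u v : Fin n → ℝ) (hu : ∀ i, 0 < u i) (hv : ∀ i, 0 < v i)
    (hMu : M *ᵥ u = specRad M • u) (hvM : v ᵥ* M = specRad M • v)
    (hnorm : v ⬝ᵥ u = 1) (i j : Fin n) :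
    ∃ ε₀ : ℝ, 0 < ε₀ ∧ ∃ μ : ℝ → ℝ,
      μ 0 = specRad M ∧
      (∀ ε ∈ Set.Ioo (-ε₀) ε₀, μ ε ∈ spectrum ℝ (M + ε • Matrix.single i j 1)) ∧
      HasDerivAt μ (v i * u j) 0 ∧ 0 < v i * u j := by
  classical
  set lam := specRad M with hlam
  set E : Matrix (Fin n) (Fin n) ℝ := Matrix.single i j 1 with hE
  set Afun : ℝ × ℝ × (Fin n → ℝ) → ℝ × (Fin n → ℝ) × ℝ := fun δ =>
    (δ.1, (M *ᵥ δ.2.2 + δ.1 • (E *ᵥ u) - (lam • δ.2.2 + δ.2.1 • u), v ⬝ᵥ δ.2.2)) with hAfun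
  have hlin : IsLinearMap ℝ Afun := by
    constructor
    · intro a b
      simp only [hAfun, Prod.fst_add, Prod.snd_add, Matrix.mulVec_add, dotProduct_add,
        Pi.add_apply, add_smul, Prod.mk_add_mk]
      refine Prod.ext rfl (Prod.ext ?_ rfl)
      simp only
      module
    · intro c a
      simp only [hAfun, Prod.smul_fst, Prod.smul_snd, Matrix.mulVec_smul, Pi.smul_apply,
        Prod.smul_mk, smul_eq_mul, dotProduct_smul]
      refine Prod.ext rfl (Prod.ext ?_ ?_)
      · simp only
        module
      · simp only
  set A_lin := hlin.mk' Afun with hA_lin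
  have hker : ∀ δ, A_lin δ = 0 → δ = 0 := by
    rintro ⟨de, dl, dw⟩ h0
    have h0' : Afun (de, dl, dw) = 0 := h0
    have h1 : de = 0 := congrArg Prod.fst h0'
    have h2 : M *ᵥ dw + de • (E *ᵥ u) - (lam • dw + dl • u) = 0 :=
      congrArg (fun q => q.2.1) h0'
    have h3 : v ⬝ᵥ dw = 0 := congrArg (fun q => q.2.2) h0'
    subst h1
    rw [zero_smul, add_zero] at h2
    have h4 := congrArg (fun x => v ⬝ᵥ x) h2
    simp only [dotProduct_sub, dotProduct_add, dotProduct_smul,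
      Matrix.dotProduct_mulVec, hvM, hnorm, h3, dotProduct_zero, smul_eq_mul,
      smul_dotProduct] at h4
    -- expect h4 to give dl = 0
    have hdl : dl = 0 := by
      have : lam * (v ⬝ᵥ dw) - (lam * (v ⬝ᵥ dw) + dl * 1) = 0 := by
        simpa [smul_dotProduct, h3, hnorm] using h4
      linarith [this]
    subst hdl
    rw [zero_smul, add_zero, sub_eq_zero] at h2
    obtain ⟨t, ht⟩ := simplicity hn M hM hirr u hu lam hMu dw h2
    have ht0 : t = 0 := by
      rw [ht] at h3
      simpa [dotProduct_smul, hnorm] using h3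
    have : dw = 0 := by rw [ht, ht0, zero_smul]
    simp [this]
  -- bijectivity
  have hinj : Function.Injective A_lin := by
    rw [← LinearMap.ker_eq_bot, LinearMap.ker_eq_bot']
    exact hker
  have hfr : Module.finrank ℝ (ℝ × ℝ × (Fin n → ℝ)) =
      Module.finrank ℝ (ℝ × (Fin n → ℝ) × ℝ) := by
    simp [Module.finrank_prod]
    ring
  have hbij : Function.Bijective A_lin :=
    ⟨hinj, (LinearMap.injective_iff_surjective_of_finrank_eq_finrank hfr).mp hinj⟩
  set Aeq := LinearEquiv.ofBijective A_lin hbij with hAeq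
  set AL := Aeq.toContinuousLinearEquiv with hAL
  have hALapp : ∀ δ, AL δ = Afun δ := fun δ => rfl
  -- continuous linear maps
  set sndsnd : (ℝ × ℝ × (Fin n → ℝ)) →L[ℝ] (Fin n → ℝ) :=
    (ContinuousLinearMap.snd ℝ ℝ (Fin n → ℝ)).comp
      (ContinuousLinearMap.snd ℝ ℝ (ℝ × (Fin n → ℝ))) with hsndsnd
  set fstP : (ℝ × ℝ × (Fin n → ℝ)) →L[ℝ] ℝ :=
    ContinuousLinearMap.fst ℝ ℝ (ℝ × (Fin n → ℝ)) with hfstP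
  set fstsnd : (ℝ × ℝ × (Fin n → ℝ)) →L[ℝ] ℝ :=
    (ContinuousLinearMap.fst ℝ ℝ (Fin n → ℝ)).comp
      (ContinuousLinearMap.snd ℝ ℝ (ℝ × (Fin n → ℝ))) with hfstsnd
  set CM := LinearMap.toContinuousLinearMap (Matrix.mulVecLin M) with hCM
  set CE := LinearMap.toContinuousLinearMap (Matrix.mulVecLin E) with hCE
  have hvlin : IsLinearMap ℝ (fun x : Fin n → ℝ => v ⬝ᵥ x) :=
    ⟨fun a b => dotProduct_add v a b, fun c a => by simp [dotProduct_smul]⟩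
  set CV := LinearMap.toContinuousLinearMap (hvlin.mk' _) with hCV
  set p₀ : ℝ × ℝ × (Fin n → ℝ) := (0, lam, u) with hp₀
  set G : ℝ × ℝ × (Fin n → ℝ) → ℝ × (Fin n → ℝ) × ℝ := fun p =>
    (p.1, (M *ᵥ p.2.2 + p.1 • (E *ᵥ p.2.2) - p.2.1 • p.2.2, v ⬝ᵥ p.2.2 - 1)) with hG
  have h_w : HasStrictFDerivAt (fun p : ℝ × ℝ × (Fin n → ℝ) => p.2.2) sndsnd p₀ :=
    sndsnd.hasStrictFDerivAt
  have h_eps : HasStrictFDerivAt (fun p : ℝ × ℝ × (Fin n → ℝ) => p.1) fstP p₀ :=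
    fstP.hasStrictFDerivAt
  have h_l : HasStrictFDerivAt (fun p : ℝ × ℝ × (Fin n → ℝ) => p.2.1) fstsnd p₀ :=
    fstsnd.hasStrictFDerivAt
  have h_Mw : HasStrictFDerivAt (fun p : ℝ × ℝ × (Fin n → ℝ) => M *ᵥ p.2.2)
      (CM.comp sndsnd) p₀ := (CM.comp sndsnd).hasStrictFDerivAt
  have h_Ew : HasStrictFDerivAt (fun p : ℝ × ℝ × (Fin n → ℝ) => E *ᵥ p.2.2)
      (CE.comp sndsnd) p₀ := (CE.comp sndsnd).hasStrictFDerivAt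
  have h_vw : HasStrictFDerivAt (fun p : ℝ × ℝ × (Fin n → ℝ) => v ⬝ᵥ p.2.2)
      (CV.comp sndsnd) p₀ := (CV.comp sndsnd).hasStrictFDerivAt
  have h_t2 := h_eps.smul h_Ew
  have h_t3 := h_l.smul h_w
  have h_F1 := (h_Mw.add h_t2).sub h_t3
  have h_F2 := h_vw.sub_const 1
  have h_G := h_eps.prodMk (h_F1.prodMk h_F2)
  have hADeq : (AL : (ℝ × ℝ × (Fin n → ℝ)) →L[ℝ] ℝ × (Fin n → ℝ) × ℝ) =
      fstP.prod (((CM.comp sndsnd + (p₀.1 • (CE.comp sndsnd) +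
        fstP.smulRight (E *ᵥ p₀.2.2)) - (p₀.2.1 • sndsnd +
        fstsnd.smulRight p₀.2.2))).prod (CV.comp sndsnd)) := by
    refine ContinuousLinearMap.ext fun δ => ?_
    have : (AL : (ℝ × ℝ × (Fin n → ℝ)) →L[ℝ] ℝ × (Fin n → ℝ) × ℝ) δ = Afun δ := rfl
    rw [this]
    simp only [hAfun, ContinuousLinearMap.prod_apply, ContinuousLinearMap.add_apply,
      ContinuousLinearMap.sub_apply, ContinuousLinearMap.comp_apply,
      ContinuousLinearMap.smul_apply, ContinuousLinearMap.smulRight_apply,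
      ContinuousLinearMap.coe_fst', ContinuousLinearMap.coe_snd', hp₀]
    refine Prod.ext rfl (Prod.ext ?_ rfl)
    simp only [hsndsnd, hfstP, hfstsnd, hCM, hCE, ContinuousLinearMap.comp_apply,
      ContinuousLinearMap.coe_fst', ContinuousLinearMap.coe_snd',
      LinearMap.coe_toContinuousLinearMap', Matrix.mulVecLin_apply, zero_smul, zero_add]
  have hG' : HasStrictFDerivAt G
      (AL : (ℝ × ℝ × (Fin n → ℝ)) →L[ℝ] ℝ × (Fin n → ℝ) × ℝ) p₀ := by
    rw [hADeq]; exact h_G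
  have hdotE : v ⬝ᵥ (E *ᵥ u) = v i * u j := by
    simp [hE, dotProduct, Matrix.mulVec, Matrix.single, ite_and, Finset.mul_sum]
  have hpos : 0 < v i * u j := mul_pos (hv i) (hu j)
  have hGp0 : G p₀ = 0 := by
    simp only [hG, hp₀]
    refine Prod.ext rfl (Prod.ext ?_ ?_)
    · simp [hMu]
    · simp [hnorm]
  set g := hG'.localInverse G AL p₀ with hg
  have hg0 : g 0 = p₀ := by rw [← hGp0]; exact hG'.localInverse_apply_image
  set μ : ℝ → ℝ := fun ε => (g (ε, 0)).2.1 with hμ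
  have hμ0 : μ 0 = lam := by
    have h00 : ((0:ℝ), (0 : (Fin n → ℝ) × ℝ)) = (0 : ℝ × (Fin n → ℝ) × ℝ) := rfl
    simp only [hμ, h00, hg0, hp₀]
  have hev := hG'.eventually_right_inverse
  rw [hGp0] at hev
  have htend : Filter.Tendsto (fun ε : ℝ => ((ε, 0) : ℝ × (Fin n → ℝ) × ℝ))
      (nhds 0) (nhds 0) := by
    have hcont : Continuous (fun ε : ℝ => ((ε, 0) : ℝ × (Fin n → ℝ) × ℝ)) :=
      continuous_id.prodMk continuous_const
    exact hcont.tendsto 0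
  have hev2 : ∀ᶠ ε in nhds (0:ℝ), G (g (ε, 0)) = (ε, 0) := htend.eventually hev
  obtain ⟨ε₀, hε₀, hball⟩ := Metric.eventually_nhds_iff.mp hev2
  have hspec : ∀ ε ∈ Set.Ioo (-ε₀) ε₀, μ ε ∈ spectrum ℝ (M + ε • E) := by
    intro ε hε
    have hd : dist ε (0:ℝ) < ε₀ := by
      rw [Real.dist_eq, sub_zero, abs_lt]; exact ⟨hε.1, hε.2⟩
    have h := hball hd
    have hc1 : (g (ε, 0)).1 = ε := congrArg Prod.fst h
    have hc2 : M *ᵥ (g (ε, 0)).2.2 + (g (ε, 0)).1 • (E *ᵥ (g (ε, 0)).2.2)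
        - (g (ε, 0)).2.1 • (g (ε, 0)).2.2 = 0 := congrArg (fun q => q.2.1) h
    have hc3 : v ⬝ᵥ (g (ε, 0)).2.2 - 1 = 0 := congrArg (fun q => q.2.2) h
    rw [hc1] at hc2
    set w := (g (ε, 0)).2.2 with hw2
    have hwne : w ≠ 0 := by
      intro h0; rw [h0] at hc3; simp at hc3
    have hkerv : ((μ ε) • (1 : Matrix (Fin n) (Fin n) ℝ) - (M + ε • E)) *ᵥ w = 0 := by
      rw [Matrix.sub_mulVec, Matrix.add_mulVec, Matrix.smul_mulVec,
        Matrix.smul_mulVec, Matrix.one_mulVec, sub_eq_zero]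
      rw [sub_eq_zero] at hc2
      exact hc2.symm
    have hdet : ((μ ε) • (1 : Matrix (Fin n) (Fin n) ℝ) - (M + ε • E)).det = 0 :=
      (Matrix.exists_mulVec_eq_zero_iff).mp ⟨w, hwne, hkerv⟩
    rw [spectrum.mem_iff]
    intro hunit
    rw [Algebra.algebraMap_eq_smul_one, Matrix.isUnit_iff_isUnit_det, hdet] at hunit
    exact hunit.ne_zero rfl
  have hgd := hG'.to_localInverse
  rw [hGp0] at hgd
  have hlin0 : HasDerivAt (fun ε : ℝ => ((ε, 0) : ℝ × (Fin n → ℝ) × ℝ))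
      ((1:ℝ), (0 : (Fin n → ℝ) × ℝ)) 0 := by
    have h := (ContinuousLinearMap.inl ℝ ℝ ((Fin n → ℝ) × ℝ)).hasDerivAt (x := (0:ℝ))
    exact h
  have hcomp : HasDerivAt (fun ε : ℝ => g (ε, 0)) (AL.symm (1, 0)) 0 := by
    have h := hgd.hasFDerivAt.comp_hasDerivAt 0 hlin0
    exact h
  have hproj : HasDerivAt μ ((AL.symm ((1:ℝ), (0 : (Fin n → ℝ) × ℝ))).2.1) 0 := by
    have h := ((ContinuousLinearMap.fst ℝ ℝ (Fin n → ℝ)).comp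
      (ContinuousLinearMap.snd ℝ ℝ (ℝ × (Fin n → ℝ)))).hasFDerivAt.comp_hasDerivAt 0 hcomp
    exact h
  have hval : (AL.symm ((1:ℝ), (0 : (Fin n → ℝ) × ℝ))).2.1 = v i * u j := by
    set x := AL.symm ((1:ℝ), (0 : (Fin n → ℝ) × ℝ)) with hx
    have happ : Afun x = (1, 0) := AL.apply_symm_apply ((1:ℝ), (0 : (Fin n → ℝ) × ℝ))
    have h1 : x.1 = 1 := congrArg Prod.fst happ
    have h2 : M *ᵥ x.2.2 + x.1 • (E *ᵥ u) - (lam • x.2.2 + x.2.1 • u) = 0 :=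
      congrArg (fun q => q.2.1) happ
    have h3 : v ⬝ᵥ x.2.2 = 0 := congrArg (fun q => q.2.2) happ
    rw [h1, one_smul] at h2
    have h4 := congrArg (fun y => v ⬝ᵥ y) h2
    simp only [dotProduct_sub, dotProduct_add, dotProduct_smul,
      Matrix.dotProduct_mulVec, hvM, smul_dotProduct, hnorm, h3, dotProduct_zero,
      smul_eq_mul, hdotE] at h4
    linarith [h4]
  have hder : HasDerivAt μ (v i * u j) 0 := hval ▸ hproj
  exact ⟨ε₀, hε₀, μ, hμ0, hspec, hder, hpos⟩
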